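/- A [0,∞]-valued adapted process M is an extended nonnegative supermartingale if and only if it is an almost-sure upward (pointwise increasing) limit of a sequence of integrable nonnegative supermartingales adapted to the same filtration. -/
import Mathlib


open MeasureTheory Filter
open scoped ENNReal NNReal

/-- Extended conditional expectation of a `[0,∞]`-valued random variable `X` given a
sub-σ-algebra `F`: the (increasing) limit of the classical conditional expectations of
the truncations `X ∧ n`. -/
noncomputable def extCondExp {Ω : Type*} {mΩ : MeasurableSpace Ω} (μ : Measure Ω)
    (F : MeasurableSpace Ω) (X : Ω → ℝ≥0∞) : Ω → ℝ≥0∞ :=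
  fun ω => ⨆ n : ℕ, ENNReal.ofReal ((μ[fun ω' => (min (X ω') n).toReal | F]) ω)

/-- Extended nonnegative supermartingale: a `[0,∞]`-valued adapted process with
`E[M_n | F_{n-1}] ≤ M_{n-1}` a.s. for all `n ≥ 1`, using the extended conditional
expectation. -/
def IsENSM {Ω : Type*} {mΩ : MeasurableSpace Ω} (μ : Measure Ω)
    (𝒢 : Filtration ℕ mΩ) (M : ℕ → Ω → ℝ≥0∞) : Prop :=
  (∀ n, Measurable[𝒢 n] (M n)) ∧
  ∀ n : ℕ, extCondExp μ (𝒢 n) (M (n + 1)) ≤ᵐ[μ] M n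

section aux
variable {Ω : Type*} {mΩ : MeasurableSpace Ω} {μ : Measure Ω} [IsProbabilityMeasure μ]
  {F : MeasurableSpace Ω}

lemma iSup_min_natCast (x : ℝ≥0∞) : ⨆ m : ℕ, min x (m : ℝ≥0∞) = x := by
  apply le_antisymm (iSup_le fun m => min_le_left _ _)
  rcases eq_or_ne x ⊤ with hx | hx
  · subst hx
    simp only [min_eq_right (le_top : (_:ℝ≥0∞) ≤ ⊤), ENNReal.iSup_natCast, le_top]
  · obtain ⟨m, hm⟩ := ENNReal.exists_nat_gt hx
    exact le_trans (le_of_eq (min_eq_left hm.le).symm) (le_iSup (fun m : ℕ => min x m) m)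

lemma trunc_integrable {X : Ω → ℝ≥0∞} (hX : AEMeasurable X μ) (m : ℕ) :
    Integrable (fun ω => (min (X ω) (m : ℝ≥0∞)).toReal) μ := by
  refine Integrable.mono' (integrable_const (m : ℝ)) ?_ (ae_of_all _ fun ω => ?_)
  · exact (hX.min aemeasurable_const).ennreal_toReal.aestronglyMeasurable
  · rw [Real.norm_eq_abs, abs_of_nonneg ENNReal.toReal_nonneg]
    simpa using ENNReal.toReal_mono (ENNReal.natCast_ne_top m) (min_le_right _ _)

lemma trunc_mono_ae {X Y : Ω → ℝ≥0∞} (hX : AEMeasurable X μ) (hY : AEMeasurable Y μ)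
    (h : X ≤ᵐ[μ] Y) (m : ℕ) :
    (μ[fun ω => (min (X ω) (m : ℝ≥0∞)).toReal | F]) ≤ᵐ[μ]
      (μ[fun ω => (min (Y ω) (m : ℝ≥0∞)).toReal | F]) :=
  condExp_mono (trunc_integrable hX m) (trunc_integrable hY m)
    (h.mono fun ω hω => ENNReal.toReal_mono
      (ne_top_of_le_ne_top (ENNReal.natCast_ne_top m) (min_le_right _ _))
      (min_le_min_right _ hω))

lemma extCondExp_mono {X Y : Ω → ℝ≥0∞} (hX : AEMeasurable X μ) (hY : AEMeasurable Y μ)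
    (h : X ≤ᵐ[μ] Y) : extCondExp μ F X ≤ᵐ[μ] extCondExp μ F Y := by
  filter_upwards [ae_all_iff.2 fun m : ℕ => trunc_mono_ae (F := F) hX hY h m] with ω hω
  exact iSup_mono fun m => ENNReal.ofReal_le_ofReal (hω m)

lemma extCondExp_le_const (hF : F ≤ mΩ) {X : Ω → ℝ≥0∞} (hX : AEMeasurable X μ) (k : ℕ)
    (h : X ≤ᵐ[μ] fun _ => (k : ℝ≥0∞)) :
    extCondExp μ F X ≤ᵐ[μ] fun _ => (k : ℝ≥0∞) := by
  have h1 : ∀ m : ℕ, (μ[fun ω => (min (X ω) (m : ℝ≥0∞)).toReal | F]) ≤ᵐ[μ] fun _ => (k : ℝ) := by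
    intro m
    refine (condExp_mono (g := fun _ => (k : ℝ)) (trunc_integrable hX m) (integrable_const _)
      (h.mono fun ω hω => ?_)).trans ?_
    · simpa using ENNReal.toReal_mono (ENNReal.natCast_ne_top k) (min_le_of_left_le hω)
    · exact Eventually.of_forall fun ω => le_of_eq (congrFun (condExp_const hF _) ω)
  filter_upwards [ae_all_iff.2 h1] with ω hω
  refine iSup_le fun m => ?_
  calc ENNReal.ofReal _ ≤ ENNReal.ofReal (k : ℝ) := ENNReal.ofReal_le_ofReal (hω m)
    _ = (k : ℝ≥0∞) := ENNReal.ofReal_natCast k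

lemma extCondExp_measurable (hF : F ≤ mΩ) (X : Ω → ℝ≥0∞) :
    Measurable[F] (extCondExp μ F X) :=
  Measurable.iSup fun m => (stronglyMeasurable_condExp.measurable).ennreal_ofReal

lemma setLIntegral_extCondExp (hF : F ≤ mΩ) {X : Ω → ℝ≥0∞} (hX : Measurable[mΩ] X)
    {s : Set Ω} (hs : MeasurableSet[F] s) :
    ∫⁻ ω in s, extCondExp μ F X ω ∂μ = ∫⁻ ω in s, X ω ∂μ := by
  haveI : SigmaFinite (μ.trim hF) := by infer_instance
  set g : ℕ → Ω → ℝ := fun m => μ[fun ω => (min (X ω) (m : ℝ≥0∞)).toReal | F] with hg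
  have hcm : ∀ m : ℕ, Measurable[mΩ] (fun ω => ENNReal.ofReal (g m ω)) :=
    fun m => ((stronglyMeasurable_condExp.measurable).mono hF le_rfl).ennreal_ofReal
  have hmono : ∀ᵐ ω ∂μ, Monotone fun m => ENNReal.ofReal (g m ω) := by
    have h1 : ∀ m : ℕ, g m ≤ᵐ[μ] g (m + 1) := fun m =>
      condExp_mono (μ := μ) (trunc_integrable (μ := μ) hX.aemeasurable m) (trunc_integrable (μ := μ) hX.aemeasurable (m + 1))
        (ae_of_all _ fun ω => ENNReal.toReal_mono
          (ne_top_of_le_ne_top (ENNReal.natCast_ne_top (m + 1)) (min_le_right _ _))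
          (min_le_min_left _ (by exact_mod_cast Nat.cast_le.2 (Nat.le_succ m))))
    filter_upwards [ae_all_iff.2 h1] with ω hω
    exact monotone_nat_of_le_succ fun m => ENNReal.ofReal_le_ofReal (hω m)
  have step1 : ∫⁻ ω in s, extCondExp μ F X ω ∂μ = ⨆ m : ℕ, ∫⁻ ω in s, ENNReal.ofReal (g m ω) ∂μ := by
    rw [show extCondExp μ F X = fun ω => ⨆ m : ℕ, ENNReal.ofReal (g m ω) from rfl]
    exact lintegral_iSup' (fun m => (hcm m).aemeasurable.restrict) (ae_restrict_of_ae hmono)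
  have step2 : ∀ m : ℕ, ∫⁻ ω in s, ENNReal.ofReal (g m ω) ∂μ
      = ∫⁻ ω in s, min (X ω) (m : ℝ≥0∞) ∂μ := by
    intro m
    have hnn : 0 ≤ᵐ[μ] g m :=
      condExp_nonneg (ae_of_all _ fun ω => ENNReal.toReal_nonneg)
    rw [← ofReal_integral_eq_lintegral_ofReal integrable_condExp.restrict
      (ae_restrict_of_ae hnn)]
    rw [setIntegral_condExp hF (trunc_integrable (μ := μ) hX.aemeasurable m) hs]
    rw [ofReal_integral_eq_lintegral_ofReal (trunc_integrable hX.aemeasurable m).restrict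
      (ae_of_all _ fun ω => ENNReal.toReal_nonneg)]
    refine lintegral_congr fun ω => ENNReal.ofReal_toReal
      (ne_top_of_le_ne_top (ENNReal.natCast_ne_top m) (min_le_right _ _))
  have step3 : ⨆ m : ℕ, ∫⁻ ω in s, min (X ω) (m : ℝ≥0∞) ∂μ = ∫⁻ ω in s, X ω ∂μ := by
    have h1 : ∀ m : ℕ, Measurable[mΩ] fun ω => min (X ω) (m : ℝ≥0∞) :=
      fun m => hX.min measurable_const
    have h2 : Monotone fun (m : ℕ) (ω : Ω) => min (X ω) (m : ℝ≥0∞) :=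
      fun m m' h ω => min_le_min_left _ (by exact_mod_cast Nat.cast_le.2 h)
    calc ⨆ m : ℕ, ∫⁻ ω in s, min (X ω) (m : ℝ≥0∞) ∂μ
        = ∫⁻ ω in s, ⨆ m : ℕ, min (X ω) (m : ℝ≥0∞) ∂μ := (lintegral_iSup h1 h2).symm
      _ = ∫⁻ ω in s, X ω ∂μ := lintegral_congr fun ω => iSup_min_natCast (X ω)
  rw [step1]
  simp_rw [step2]
  exact step3

lemma ae_le_of_forall_setLIntegral_le' (hF : F ≤ mΩ) {f g : Ω → ℝ≥0∞}
    (hf : Measurable[F] f) (hg : Measurable[F] g)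
    (h : ∀ s : Set Ω, MeasurableSet[F] s → ∫⁻ ω in s, f ω ∂μ ≤ ∫⁻ ω in s, g ω ∂μ) :
    f ≤ᵐ[μ] g := by
  refine ae_le_of_ae_le_trim (hm := hF) ?_
  refine ae_le_of_forall_setLIntegral_le_of_sigmaFinite₀ (μ := μ.trim hF)
    hf.aemeasurable fun s hs _ => ?_
  rw [restrict_trim hF μ hs, lintegral_trim hF hf, lintegral_trim hF hg]
  exact h s hs

end aux

/-- a `[0,∞]`-valued adapted process is an ENSM if and only if it is an
almost-sure upward (pointwise increasing) limit of integrable nonnegative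
supermartingales adapted to the same filtration. -/
theorem isENSM_iff_upward_limit_of_integrable_NSMs
    {Ω : Type*} {mΩ : MeasurableSpace Ω} (μ : Measure Ω) [IsProbabilityMeasure μ]
    (𝒢 : Filtration ℕ mΩ) (M : ℕ → Ω → ℝ≥0∞) (hadapted : ∀ n, Measurable[𝒢 n] (M n)) :
    IsENSM μ 𝒢 M ↔
      ∃ N : ℕ → ℕ → Ω → ℝ≥0∞,
        (∀ k, IsENSM μ 𝒢 (N k) ∧ ∀ n, ∫⁻ ω, N k n ω ∂μ ≠ ⊤) ∧
        ∀ n, ∀ᵐ ω ∂μ, Monotone (fun k => N k n ω) ∧ (⨆ k, N k n ω) = M n ω := by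
  have hmeasM : ∀ j, Measurable[mΩ] (M j) := fun j => (hadapted j).mono (𝒢.le j) le_rfl
  constructor
  · rintro ⟨-, hsuper⟩
    refine ⟨fun k n ω => min (M n ω) (k : ℝ≥0∞), fun k => ⟨⟨fun n =>
      (hadapted n).min (@measurable_const ℝ≥0∞ Ω _ (𝒢 n) _), fun n => ?_⟩, fun n => ?_⟩,
      fun n => ae_of_all _ fun ω => ⟨fun k k' hk => min_le_min_left _ (Nat.cast_le.2 hk),
        iSup_min_natCast (M n ω)⟩⟩
    · have hminmeas : Measurable[mΩ] fun ω => min (M (n + 1) ω) (k : ℝ≥0∞) :=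
        (hmeasM (n + 1)).min measurable_const
      have h1 : extCondExp μ (𝒢 n) (fun ω => min (M (n + 1) ω) (k : ℝ≥0∞)) ≤ᵐ[μ] M n :=
        (extCondExp_mono (μ := μ) (F := 𝒢 n) hminmeas.aemeasurable (hmeasM (n + 1)).aemeasurable
          (ae_of_all _ fun ω => min_le_left _ _)).trans (hsuper n)
      have h2 := extCondExp_le_const (μ := μ) (𝒢.le n) hminmeas.aemeasurable k
        (ae_of_all _ fun ω => min_le_right _ _)
      filter_upwards [h1, h2] with ω hω1 hω2
      exact le_min hω1 hω2
    · refine ne_top_of_le_ne_top ?_ (lintegral_mono fun ω => min_le_right (M n ω) (k : ℝ≥0∞))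
      rw [lintegral_const]
      exact ENNReal.mul_ne_top (ENNReal.natCast_ne_top k) (measure_ne_top μ _)
  · rintro ⟨N, hN, hlim⟩
    refine ⟨hadapted, fun n => ?_⟩
    have hFn := 𝒢.le n
    have hmeasN : ∀ k j, Measurable[mΩ] (N k j) :=
      fun k j => ((hN k).1.1 j).mono (𝒢.le j) le_rfl
    refine ae_le_of_forall_setLIntegral_le' hFn (extCondExp_measurable hFn _) (hadapted n) ?_
    intro s hs
    rw [setLIntegral_extCondExp hFn (hmeasM (n + 1)) hs]
    have hNle : ∀ k, N k n ≤ᵐ[μ] M n := fun k =>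
      (hlim n).mono fun ω hω => hω.2 ▸ le_iSup (fun k => N k n ω) k
    have key : ∫⁻ ω in s, M (n + 1) ω ∂μ = ⨆ k, ∫⁻ ω in s, N k (n + 1) ω ∂μ := by
      calc ∫⁻ ω in s, M (n + 1) ω ∂μ = ∫⁻ ω in s, ⨆ k, N k (n + 1) ω ∂μ :=
            lintegral_congr_ae (ae_restrict_of_ae ((hlim (n + 1)).mono fun ω hω => hω.2.symm))
        _ = ⨆ k, ∫⁻ ω in s, N k (n + 1) ω ∂μ :=
            lintegral_iSup' (fun k => (hmeasN k (n + 1)).aemeasurable.restrict)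
              (ae_restrict_of_ae ((hlim (n + 1)).mono fun ω hω => hω.1))
    rw [key]
    refine iSup_le fun k => ?_
    calc ∫⁻ ω in s, N k (n + 1) ω ∂μ
        = ∫⁻ ω in s, extCondExp μ (𝒢 n) (N k (n + 1)) ω ∂μ :=
          (setLIntegral_extCondExp hFn (hmeasN k (n + 1)) hs).symm
      _ ≤ ∫⁻ ω in s, N k n ω ∂μ := lintegral_mono_ae (ae_restrict_of_ae ((hN k).1.2 n))
      _ ≤ ∫⁻ ω in s, M n ω ∂μ := lintegral_mono_ae (ae_restrict_of_ae (hNle k))
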